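/- Let x, y be generators of a grid diagram of size N and let D ∈ 𝒟(x,y) be a positive domain with μ(D) = 1. Then x and y differ in exactly two values: there are i₁ ≠ i₂ in ℤ/N with x(i) = y(i) for all i ∉ {i₁, i₂}. Moreover D takes only the values 0 and 1; the set of squares on which D = 1 is a product I × J of two proper cyclic intervals of ℤ/N; the four corner lattice points of this rectangle are exactly the four points (i₁, x(i₁)), (i₂, x(i₂)), (i₁, y(i₁)), (i₂, y(i₂)), with the lower-left and upper-right corners belonging to x \ y and the other two corners belonging to y \ x; and n_p(D) = 0 for every point p = (i, x(i)) with i ∉ {i₁, i₂}, i.e. the rectangle contains no other coordinate of x or of y in its interior. -/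

import Mathlib

/-- A generator of a grid diagram of size `N`: a permutation of `ℤ/N`. -/
abbrev GridGen (N : ℕ) := Equiv.Perm (ZMod N)

/-- The alternating corner sum of a 2-chain `D` at the lattice point `(a, b)`. -/
def cornerSum (N : ℕ) (D : ZMod N → ZMod N → ℤ) (a b : ZMod N) : ℤ :=
  D a b - D (a - 1) b - D a (b - 1) + D (a - 1) (b - 1)

/-- `D` is a domain from the generator `x` to the generator `y`: the alternating
corner sum at a lattice point `p` is `1` if `p ∈ x \ y`, `-1` if `p ∈ y \ x`, and
`0` otherwise. -/
def IsGridDomain (N : ℕ) (x y : GridGen N) (D : ZMod N → ZMod N → ℤ) : Prop :=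
  ∀ a b : ZMod N, cornerSum N D a b =
    if x a = b ∧ y a ≠ b then 1 else if y a = b ∧ x a ≠ b then -1 else 0

/-- The point measure `n_p(D)` at the lattice point `p = (a, b)`: the average of
the values of `D` on the four squares around `p`. -/
def gridNp (N : ℕ) (D : ZMod N → ZMod N → ℤ) (a b : ZMod N) : ℚ :=
  ((D a b : ℚ) + (D (a - 1) b : ℚ) + (D a (b - 1) : ℚ) + (D (a - 1) (b - 1) : ℚ)) / 4

/-- The Maslov index `μ(D) = Σ_i (n_{(i, x i)}(D) + n_{(i, y i)}(D))`. -/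
def maslovIndex (N : ℕ) [NeZero N] (x y : GridGen N) (D : ZMod N → ZMod N → ℤ) : ℚ :=
  ∑ i : ZMod N, (gridNp N D i (x i) + gridNp N D i (y i))

set_option linter.unusedSectionVars false
section helpers
variable {N : ℕ} [NeZero N]

lemma natCast_val' (z : ZMod N) : ((z.val : ℕ) : ZMod N) = z := by
  simp [ZMod.natCast_val, ZMod.cast_id]

lemma val_inj' {z w : ZMod N} (h : z.val = w.val) : z = w := by
  rw [← natCast_val' z, ← natCast_val' w, h]

lemma val_sub_one' (z : ZMod N) (hz : z ≠ 0) : (z - 1).val = z.val - 1 := by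
  have h1 : 0 < z.val := ZMod.val_pos.mpr hz
  have hlt : z.val - 1 < N := by have := z.val_lt; omega
  have : z - 1 = ((z.val - 1 : ℕ) : ZMod N) := by
    rw [Nat.cast_sub h1, natCast_val']; simp
  rw [this, ZMod.val_natCast_of_lt hlt]

lemma tele (h : ZMod N → ℤ) : ∑ b : ZMod N, (h b - h (b - 1)) = 0 := by
  rw [Finset.sum_sub_distrib]
  rw [Fintype.sum_equiv (Equiv.subRight (1 : ZMod N)) (fun b => h (b - 1)) h (fun _ => rfl)]
  exact sub_self _

lemma step_formula (p q : ZMod N) (hpq : p ≠ q) (c : ℤ) (h : ZMod N → ℤ)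
    (hh : ∀ b, h b - h (b - 1) =
      c * ((if b = p then 1 else 0) - (if b = q then 1 else 0))) :
    ∀ b, h b = h (p - 1) + c * (if (b - p).val < (q - p).val then 1 else 0) := by
  have hd : 0 < (q - p).val := ZMod.val_pos.mpr (sub_ne_zero.mpr (Ne.symm hpq))
  suffices H : ∀ t : ℕ, ∀ b : ZMod N, (b - p).val = t →
      h b = h (p - 1) + c * (if (b - p).val < (q - p).val then 1 else 0) by
    intro b; exact H _ b rfl
  intro t
  induction t with
  | zero =>
    intro b hb
    have hbp : b = p := sub_eq_zero.mp ((ZMod.val_eq_zero _).mp hb)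
    subst hbp
    have h2 := hh b
    rw [if_pos rfl, if_neg hpq] at h2
    rw [hb, if_pos hd]
    linarith
  | succ t ih =>
    intro b hb
    have hbp : b ≠ p := by
      intro e; subst e
      simp only [sub_self, ZMod.val_zero] at hb; omega
    have hsub : b - p ≠ 0 := sub_ne_zero.mpr hbp
    have hb1 : (b - 1 - p).val = t := by
      have e : b - 1 - p = (b - p) - 1 := by ring
      rw [e, val_sub_one' _ hsub, hb]
      omega
    have ihb := ih (b - 1) hb1
    have hhb := hh b
    rw [if_neg hbp] at hhb
    rw [hb1] at ihb
    rw [hb]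
    by_cases hq : b = q
    · have hdq : (q - p).val = t + 1 := by rw [← hq, hb]
      rw [if_pos hq] at hhb
      rw [hdq, if_pos (Nat.lt_succ_self t)] at ihb
      rw [hdq, if_neg (lt_irrefl _)]
      linarith
    · rw [if_neg hq] at hhb
      have hne : t + 1 ≠ (q - p).val := by
        intro e
        exact hq (sub_left_inj.mp (val_inj' (by rw [hb, ← e])))
      by_cases hlt : t + 1 < (q - p).val
      · rw [if_pos (by omega)] at ihb
        rw [if_pos hlt]; linarith
      · rw [if_neg (by omega)] at ihb
        rw [if_neg hlt]; linarith

lemma const_formula (h : ZMod N → ℤ)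
    (hh : ∀ b, h b = h (b - 1)) : ∀ b c : ZMod N, h b = h c := by
  by_cases h10 : (1 : ZMod N) = 0
  · haveI := subsingleton_of_zero_eq_one h10.symm
    intro b c; rw [Subsingleton.elim b c]
  · intro b c
    have hpq : c + 1 ≠ c := by
      intro e
      exact h10 (by linear_combination e)
    have := step_formula (c + 1) c hpq 0 h (by
      intro b; rw [← hh b]; ring) b
    simpa using this

lemma mem_int_iff (z w : ZMod N) (m : ℕ) (hm : m ≤ N) :
    (w - z).val < m ↔ ∃ j : ℕ, j < m ∧ w = z + (j : ZMod N) := by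
  constructor
  · intro h
    exact ⟨(w - z).val, h, by rw [natCast_val']; ring⟩
  · rintro ⟨j, hj, rfl⟩
    have e : z + (j : ZMod N) - z = (j : ZMod N) := by ring
    rw [e, ZMod.val_natCast_of_lt (lt_of_lt_of_le hj hm)]
    exact hj

lemma natcast_N_sub (k : ℕ) (hk : k ≤ N) : ((N - k : ℕ) : ZMod N) = -(k : ZMod N) := by
  rw [Nat.cast_sub hk, ZMod.natCast_self]; ring

lemma compl_int (a p : ZMod N) (m : ℕ) (hm1 : 1 ≤ m) (hm2 : m < N) :
    (¬ (p - a).val < m) ↔ (p - (a + (m : ZMod N))).val < N - m := by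
  have ht := (p - a).val_lt
  have e1 : p - (a + (m : ZMod N)) = (p - a) + ((N - m : ℕ) : ZMod N) := by
    rw [natcast_N_sub m (le_of_lt hm2)]; ring
  have e2 : (p - a) + ((N - m : ℕ) : ZMod N) = (((p - a).val + (N - m) : ℕ) : ZMod N) := by
    rw [Nat.cast_add, natCast_val']
  rw [e1, e2, ZMod.val_natCast]
  set t := (p - a).val
  rcases lt_or_ge t m with h | h
  · rw [Nat.mod_eq_of_lt (by omega)]
    omega
  · have e3 : t + (N - m) = (t - m) + 1 * N := by omega
    rw [e3, Nat.add_mul_mod_self_right, Nat.mod_eq_of_lt (by omega)]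
    omega

lemma np_zero_parts {D : ZMod N → ZMod N → ℤ} (hpos : ∀ p q : ZMod N, 0 ≤ D p q)
    {i b : ZMod N} (h : gridNp N D i b = 0) :
    D i b = 0 ∧ D (i - 1) b = 0 ∧ D i (b - 1) = 0 ∧ D (i - 1) (b - 1) = 0 := by
  unfold gridNp at h
  rw [div_eq_zero_iff] at h
  have h4 : (D i b : ℚ) + D (i - 1) b + D i (b - 1) + D (i - 1) (b - 1) = 0 := by
    rcases h with h | h
    · exact h
    · norm_num at h
  have c1 : (0 : ℚ) ≤ (D i b : ℚ) := Int.cast_nonneg_iff.mpr (hpos _ _)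
  have c2 : (0 : ℚ) ≤ (D (i - 1) b : ℚ) := Int.cast_nonneg_iff.mpr (hpos _ _)
  have c3 : (0 : ℚ) ≤ (D i (b - 1) : ℚ) := Int.cast_nonneg_iff.mpr (hpos _ _)
  have c4 : (0 : ℚ) ≤ (D (i - 1) (b - 1) : ℚ) := Int.cast_nonneg_iff.mpr (hpos _ _)
  refine ⟨?_, ?_, ?_, ?_⟩
  · exact_mod_cast (by linarith : ((D i b : ℚ)) = 0)
  · exact_mod_cast (by linarith : ((D (i - 1) b : ℚ)) = 0)
  · exact_mod_cast (by linarith : ((D i (b - 1) : ℚ)) = 0)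
  · exact_mod_cast (by linarith : ((D (i - 1) (b - 1) : ℚ)) = 0)

lemma np_quarter_parts {D : ZMod N → ZMod N → ℤ}
    {i b : ZMod N} (h : gridNp N D i b = 1 / 4) :
    D i b + D (i - 1) b + D i (b - 1) + D (i - 1) (b - 1) = 1 := by
  unfold gridNp at h
  have h4 : (D i b : ℚ) + D (i - 1) b + D i (b - 1) + D (i - 1) (b - 1) = 1 := by
    field_simp at h
    linarith
  exact_mod_cast h4

end helpers

lemma parity_contra (N : ℕ) [NeZero N] (x : GridGen N) (D : ZMod N → ZMod N → ℤ)
    (hD : IsGridDomain N x x D) (hmu : maslovIndex N x x D = 1) : False := by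
  have hC0 : ∀ a b : ZMod N, cornerSum N D a b = 0 := by
    intro a b
    rw [hD a b]
    split_ifs with h1
    · exact absurd h1.1 h1.2
    · rfl
  have hF : ∀ a b : ZMod N, D a b - D (a - 1) b = D a 0 - D (a - 1) 0 := by
    intro a b
    have hh : ∀ b : ZMod N, D a b - D (a - 1) b = D a (b - 1) - D (a - 1) (b - 1) := by
      intro b; have hc := hC0 a b; unfold cornerSum at hc; linarith
    exact const_formula (fun b => D a b - D (a - 1) b) (fun b => hh b) b 0
  have hG : ∀ a b : ZMod N, D a b - D a (b - 1) = D 0 b - D 0 (b - 1) := by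
    intro a b
    have hh : ∀ a : ZMod N, D a b - D a (b - 1) = D (a - 1) b - D (a - 1) (b - 1) := by
      intro a; have hc := hC0 a b; unfold cornerSum at hc; linarith
    exact const_formula (fun a => D a b - D a (b - 1)) (fun a => hh a) a 0
  have key : ∀ i : ZMod N, gridNp N D i (x i) + gridNp N D i (x i) =
      ((2 * D i (x i) - (D i 0 - D (i - 1) 0) - (D 0 (x i) - D 0 (x i - 1)) : ℤ) : ℚ) := by
    intro i
    have e1 := hF i (x i)
    have e2 := hG i (x i)
    have e3 := hG (i - 1) (x i)
    have hs : D i (x i) + D (i - 1) (x i) + D i (x i - 1) + D (i - 1) (x i - 1) =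
        2 * (2 * D i (x i) - (D i 0 - D (i - 1) 0) - (D 0 (x i) - D 0 (x i - 1))) := by
      linarith
    unfold gridNp
    have hsq := congrArg (Int.cast : ℤ → ℚ) hs
    push_cast at hsq ⊢
    linarith
  unfold maslovIndex at hmu
  rw [Finset.sum_congr rfl (fun i _ => key i)] at hmu
  rw [← Int.cast_sum] at hmu
  have hK : ∑ i : ZMod N, (2 * D i (x i) - (D i 0 - D (i - 1) 0) - (D 0 (x i) - D 0 (x i - 1))) = 1 := by
    exact_mod_cast hmu
  have hsplit : ∑ i : ZMod N, (2 * D i (x i) - (D i 0 - D (i - 1) 0) - (D 0 (x i) - D 0 (x i - 1)))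
      = 2 * (∑ i : ZMod N, D i (x i)) - (∑ i : ZMod N, (D i 0 - D (i - 1) 0))
        - (∑ i : ZMod N, (D 0 (x i) - D 0 (x i - 1))) := by
    rw [Finset.mul_sum]
    rw [← Finset.sum_sub_distrib, ← Finset.sum_sub_distrib]
  have hTF : ∑ i : ZMod N, (D i 0 - D (i - 1) 0) = 0 := tele (fun a => D a 0)
  have hTG : ∑ i : ZMod N, (D 0 (x i) - D 0 (x i - 1)) = 0 := by
    have := Equiv.sum_comp x (fun b => D 0 b - D 0 (b - 1))
    rw [this]
    exact tele (fun b => D 0 b)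
  rw [hsplit, hTF, hTG] at hK
  omega

set_option maxHeartbeats 2000000 in
/-- A positive domain `D ∈ 𝒟(x,y)` of Maslov index `1` is an
empty rectangle: `x` and `y` differ in exactly two values `i₁ = a` and
`i₂ = a + m`; `D` takes only the values `0` and `1`, and `D = 1` exactly on a
product `I × J` of two proper cyclic intervals; the four corners of this
rectangle are exactly the four points `(i₁, x i₁), (i₂, x i₂), (i₁, y i₁),
(i₂, y i₂)`, with the lower-left and upper-right corners in `x \ y` and the
other two corners in `y \ x`; and `n_p(D) = 0` for every other coordinate
`p = (i, x i)`. -/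
theorem positive_index_one_domain_is_empty_rectangle
    (N : ℕ) [NeZero N] (hN : 2 ≤ N)
    (σO σX : GridGen N) (hσ : ∀ i : ZMod N, σO i ≠ σX i)
    (x y : GridGen N) (D : ZMod N → ZMod N → ℤ)
    (hD : IsGridDomain N x y D) (hpos : ∀ p q : ZMod N, 0 ≤ D p q)
    (hmu : maslovIndex N x y D = 1) :
    ∃ (a b : ZMod N) (m m' : ℕ),
      1 ≤ m ∧ m ≤ N - 1 ∧ 1 ≤ m' ∧ m' ≤ N - 1 ∧
      (∀ p q : ZMod N,
        (D p q = 0 ∨ D p q = 1) ∧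
        (D p q = 1 ↔
          (∃ j : ℕ, j < m ∧ p = a + (j : ZMod N)) ∧
            (∃ j : ℕ, j < m' ∧ q = b + (j : ZMod N)))) ∧
      x a = b ∧ y a ≠ b ∧
      x (a + (m : ZMod N)) = b + (m' : ZMod N) ∧
      y (a + (m : ZMod N)) ≠ b + (m' : ZMod N) ∧
      y a = b + (m' : ZMod N) ∧ x a ≠ b + (m' : ZMod N) ∧
      y (a + (m : ZMod N)) = b ∧ x (a + (m : ZMod N)) ≠ b ∧
      a ≠ a + (m : ZMod N) ∧
      ∀ i : ZMod N, i ≠ a → i ≠ a + (m : ZMod N) →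
        x i = y i ∧ gridNp N D i (x i) = 0 := by
  classical
  have hnp_nonneg : ∀ i b : ZMod N, 0 ≤ gridNp N D i b := by
    intro i b; unfold gridNp
    have c1 : (0:ℚ) ≤ (D i b : ℚ) := Int.cast_nonneg_iff.mpr (hpos _ _)
    have c2 : (0:ℚ) ≤ (D (i-1) b : ℚ) := Int.cast_nonneg_iff.mpr (hpos _ _)
    have c3 : (0:ℚ) ≤ (D i (b-1) : ℚ) := Int.cast_nonneg_iff.mpr (hpos _ _)
    have c4 : (0:ℚ) ≤ (D (i-1) (b-1) : ℚ) := Int.cast_nonneg_iff.mpr (hpos _ _)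
    have : (0:ℚ) ≤ (4:ℚ) := by norm_num
    apply div_nonneg (by linarith) this
  have hquarter : ∀ i : ZMod N, x i ≠ y i →
      1/4 ≤ gridNp N D i (x i) ∧ 1/4 ≤ gridNp N D i (y i) := by
    intro i hi
    constructor
    · have hc := hD i (x i)
      rw [if_pos ⟨rfl, Ne.symm hi⟩] at hc
      unfold cornerSum at hc
      have h1 := hpos i (x i); have h2 := hpos (i-1) (x i)
      have h3 := hpos i (x i - 1); have h4 := hpos (i-1) (x i - 1)
      have hs : 1 ≤ D i (x i) + D (i-1) (x i) + D i (x i - 1) + D (i-1) (x i - 1) := by omega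
      unfold gridNp
      have hc' : (1:ℚ) ≤ (D i (x i):ℚ) + (D (i-1) (x i):ℚ) + (D i (x i - 1):ℚ) + (D (i-1) (x i - 1):ℚ) := by
        exact_mod_cast hs
      linarith
    · have hc := hD i (y i)
      rw [if_neg (by rintro ⟨-, hk⟩; exact hk rfl), if_pos ⟨rfl, hi⟩] at hc
      unfold cornerSum at hc
      have h1 := hpos i (y i); have h2 := hpos (i-1) (y i)
      have h3 := hpos i (y i - 1); have h4 := hpos (i-1) (y i - 1)
      have hs : 1 ≤ D i (y i) + D (i-1) (y i) + D i (y i - 1) + D (i-1) (y i - 1) := by omega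
      unfold gridNp
      have hc' : (1:ℚ) ≤ (D i (y i):ℚ) + (D (i-1) (y i):ℚ) + (D i (y i - 1):ℚ) + (D (i-1) (y i - 1):ℚ) := by
        exact_mod_cast hs
      linarith
  have hterm_nonneg : ∀ i : ZMod N, 0 ≤ gridNp N D i (x i) + gridNp N D i (y i) :=
    fun i => add_nonneg (hnp_nonneg _ _) (hnp_nonneg _ _)
  have hsum1 : ∑ i : ZMod N, (gridNp N D i (x i) + gridNp N D i (y i)) = 1 := hmu
  have hSle : ∑ i ∈ Finset.univ.filter (fun i : ZMod N => x i ≠ y i),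
      (gridNp N D i (x i) + gridNp N D i (y i)) ≤ 1 := by
    rw [← hsum1]
    exact Finset.sum_le_sum_of_subset_of_nonneg (Finset.subset_univ _)
      (fun i _ _ => hterm_nonneg i)
  have hSge : ((Finset.univ.filter (fun i : ZMod N => x i ≠ y i)).card : ℚ) * (1/2) ≤
      ∑ i ∈ Finset.univ.filter (fun i : ZMod N => x i ≠ y i),
        (gridNp N D i (x i) + gridNp N D i (y i)) := by
    calc ((Finset.univ.filter (fun i : ZMod N => x i ≠ y i)).card : ℚ) * (1/2)
        = ∑ _i ∈ Finset.univ.filter (fun i : ZMod N => x i ≠ y i), (1/2 : ℚ) := by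
          rw [Finset.sum_const, nsmul_eq_mul]
      _ ≤ _ := Finset.sum_le_sum (fun i hi => by
          obtain ⟨q1, q2⟩ := hquarter i (by simpa using hi)
          linarith)
  have hcard2 : (Finset.univ.filter (fun i : ZMod N => x i ≠ y i)).card ≤ 2 := by
    by_contra hc
    push_neg at hc
    have : (3:ℚ) ≤ ((Finset.univ.filter (fun i : ZMod N => x i ≠ y i)).card : ℚ) := by
      exact_mod_cast hc
    linarith
  have hcard_ne0 : (Finset.univ.filter (fun i : ZMod N => x i ≠ y i)).card ≠ 0 := by
    intro h0
    rw [Finset.card_eq_zero] at h0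
    have hxy : x = y := by
      apply Equiv.ext
      intro i
      by_contra hne
      have hm : i ∈ Finset.univ.filter (fun i : ZMod N => x i ≠ y i) := by simpa using hne
      rw [h0] at hm
      exact absurd hm (Finset.notMem_empty i)
    subst hxy
    exact parity_contra N x D hD hmu
  have hcard_ne1 : (Finset.univ.filter (fun i : ZMod N => x i ≠ y i)).card ≠ 1 := by
    intro h1
    obtain ⟨a₀, ha₀⟩ := Finset.card_eq_one.mp h1
    have hxa : x a₀ ≠ y a₀ := by
      have : a₀ ∈ Finset.univ.filter (fun i : ZMod N => x i ≠ y i) := by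
        rw [ha₀]; exact Finset.mem_singleton_self a₀
      simpa using this
    have hoth : ∀ i, i ≠ a₀ → x i = y i := by
      intro i hi
      by_contra hne
      have hm : i ∈ Finset.univ.filter (fun i : ZMod N => x i ≠ y i) := by simpa using hne
      rw [ha₀, Finset.mem_singleton] at hm
      exact hi hm
    have hxj : x (x.symm (y a₀)) = y a₀ := x.apply_symm_apply _
    have hja : x.symm (y a₀) ≠ a₀ := by
      intro e; rw [e] at hxj; exact hxa hxj
    have h2 := hoth _ hja
    have h3 : y (x.symm (y a₀)) = y a₀ := by rw [← h2]; exact hxj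
    exact hja (y.injective h3)
  have hcard : (Finset.univ.filter (fun i : ZMod N => x i ≠ y i)).card = 2 := by omega
  obtain ⟨a₁, a₂, ha12, hSpair⟩ := Finset.card_eq_two.mp hcard
  have hxy_off : ∀ i, i ≠ a₁ → i ≠ a₂ → x i = y i := by
    intro i h1 h2; by_contra hne
    have hm : i ∈ Finset.univ.filter (fun i : ZMod N => x i ≠ y i) := by simpa using hne
    rw [hSpair, Finset.mem_insert, Finset.mem_singleton] at hm
    tauto
  have hxa1 : x a₁ ≠ y a₁ := by
    have : a₁ ∈ Finset.univ.filter (fun i : ZMod N => x i ≠ y i) := by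
      rw [hSpair]; simp
    simpa using this
  have hxa2 : x a₂ ≠ y a₂ := by
    have : a₂ ∈ Finset.univ.filter (fun i : ZMod N => x i ≠ y i) := by
      rw [hSpair]; simp
    simpa using this
  -- equality extraction
  have hsplit := Finset.sum_filter_add_sum_filter_not Finset.univ (fun i : ZMod N => x i ≠ y i)
    (fun i => gridNp N D i (x i) + gridNp N D i (y i))
  have hoffnn : 0 ≤ ∑ i ∈ Finset.univ.filter (fun i : ZMod N => ¬ x i ≠ y i),
      (gridNp N D i (x i) + gridNp N D i (y i)) :=
    Finset.sum_nonneg (fun i _ => hterm_nonneg i)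
  have hpairsum0 : ∑ i ∈ Finset.univ.filter (fun i : ZMod N => x i ≠ y i),
      (gridNp N D i (x i) + gridNp N D i (y i)) =
      (gridNp N D a₁ (x a₁) + gridNp N D a₁ (y a₁)) +
      (gridNp N D a₂ (x a₂) + gridNp N D a₂ (y a₂)) := by
    rw [hSpair, Finset.sum_pair ha12]
  have hq1 := hquarter a₁ hxa1
  have hq2 := hquarter a₂ hxa2
  have hofftotal : ∑ i ∈ Finset.univ.filter (fun i : ZMod N => ¬ x i ≠ y i),
      (gridNp N D i (x i) + gridNp N D i (y i)) = 0 := by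
    rw [hsum1] at hsplit
    rw [hpairsum0] at hsplit
    linarith [hq1.1, hq1.2, hq2.1, hq2.2]
  have hoff : ∀ i, i ≠ a₁ → i ≠ a₂ → gridNp N D i (x i) = 0 ∧ gridNp N D i (y i) = 0 := by
    intro i h1 h2
    have hmem : i ∈ Finset.univ.filter (fun i : ZMod N => ¬ x i ≠ y i) := by
      simp only [Finset.mem_filter, Finset.mem_univ, true_and, not_not]
      exact hxy_off i h1 h2
    have := (Finset.sum_eq_zero_iff_of_nonneg (fun i _ => hterm_nonneg i)).mp hofftotal i hmem
    constructor <;> nlinarith [hnp_nonneg i (x i), hnp_nonneg i (y i)]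
  have hq11 : gridNp N D a₁ (x a₁) = 1/4 := by
    rw [hsum1, hpairsum0, hofftotal] at hsplit
    linarith [hq1.1, hq1.2, hq2.1, hq2.2]
    -- names for the two special rows
  obtain ⟨b₁, hx1⟩ : ∃ b, x a₁ = b := ⟨_, rfl⟩
  obtain ⟨b₂, hx2⟩ : ∃ b, x a₂ = b := ⟨_, rfl⟩
  have hb12 : b₁ ≠ b₂ := by
    rw [← hx1, ← hx2]
    exact fun e => ha12 (x.injective e)
  have hy1 : y a₁ = b₂ := by
    have hxj : x (x.symm (y a₁)) = y a₁ := x.apply_symm_apply _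
    have hj1 : x.symm (y a₁) ≠ a₁ := by
      intro e; rw [e] at hxj; exact hxa1 hxj
    by_cases hj2 : x.symm (y a₁) = a₂
    · rw [hj2, hx2] at hxj; exact hxj.symm
    · have h2 := hxy_off _ hj1 hj2
      rw [h2] at hxj
      exact absurd (y.injective hxj) hj1
  have hy2 : y a₂ = b₁ := by
    have hxj : x (x.symm (y a₂)) = y a₂ := x.apply_symm_apply _
    have hj2 : x.symm (y a₂) ≠ a₂ := by
      intro e; rw [e] at hxj; exact hxa2 hxj
    by_cases hj1 : x.symm (y a₂) = a₁
    · rw [hj1, hx1] at hxj; exact hxj.symm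
    · have h2 := hxy_off _ hj1 hj2
      rw [h2] at hxj
      exact absurd (y.injective hxj) hj2
  -- F1: vanishing of the four squares at off points
  have F1 : ∀ i, i ≠ a₁ → i ≠ a₂ →
      D i (x i) = 0 ∧ D (i-1) (x i) = 0 ∧ D i (x i - 1) = 0 ∧ D (i-1) (x i - 1) = 0 :=
    fun i h1 h2 => np_zero_parts hpos (hoff i h1 h2).1
  -- the corner sum at (a₁, b₁) is 1; pinning equations
  have hsum4 : D a₁ b₁ + D (a₁-1) b₁ + D a₁ (b₁-1) + D (a₁-1) (b₁-1) = 1 := by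
    have := np_quarter_parts (hq11)
    rwa [hx1] at this
  have hcorner1 : D a₁ b₁ - D (a₁-1) b₁ - D a₁ (b₁-1) + D (a₁-1) (b₁-1) = 1 := by
    have hc := hD a₁ b₁
    rw [if_pos ⟨hx1, by rw [hy1]; exact Ne.symm hb12⟩] at hc
    unfold cornerSum at hc
    exact hc
  have hz1 : D (a₁-1) b₁ = 0 := by
    have := hpos (a₁-1) b₁; have := hpos a₁ (b₁-1); omega
  have hz2 : D a₁ (b₁-1) = 0 := by
    have := hpos (a₁-1) b₁; have := hpos a₁ (b₁-1); omega
  have hz3 : D a₁ b₁ + D (a₁-1) (b₁-1) = 1 := by omega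
  -- corner sum vanishing lemmas
  have hC0' : ∀ a b : ZMod N, x a = y a → cornerSum N D a b = 0 := by
    intro a b hxa
    rw [hD a b]
    rw [hxa]
    split_ifs with h1
    · exact absurd h1.1 h1.2
    · rfl
  have hCa1 : ∀ b : ZMod N, cornerSum N D a₁ b =
      (if b = b₁ then 1 else 0) - (if b = b₂ then 1 else 0) := by
    intro b
    have hc := hD a₁ b
    rw [hx1, hy1] at hc
    by_cases e1 : b = b₁
    · subst e1
      rw [if_pos ⟨rfl, Ne.symm hb12⟩] at hc
      rw [if_pos rfl, if_neg hb12]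
      linarith
    · by_cases e2 : b = b₂
      · subst e2
        rw [if_neg (fun hk => hb12 hk.1), if_pos ⟨rfl, hb12⟩] at hc
        rw [if_neg (Ne.symm hb12), if_pos rfl]
        linarith
      · rw [if_neg (fun hk => e1 hk.1.symm), if_neg (fun hk => e2 hk.1.symm)] at hc
        rw [if_neg e1, if_neg e2]
        linarith
  have hCrow0 : ∀ a b : ZMod N, b ≠ b₁ → b ≠ b₂ → cornerSum N D a b = 0 := by
    intro a b h1 h2
    rw [hD a b]
    split_ifs with k1 k2
    · exfalso
      by_cases e1 : a = a₁
      · rw [e1, hx1] at k1; exact h1 k1.1.symm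
      · by_cases e2 : a = a₂
        · rw [e2, hx2] at k1; exact h2 k1.1.symm
        · exact k1.2 (by rw [← hxy_off a e1 e2]; exact k1.1)
    · exfalso
      by_cases e1 : a = a₁
      · rw [e1, hy1] at k2; exact h2 k2.1.symm
      · by_cases e2 : a = a₂
        · rw [e2, hy2] at k2; exact h1 k2.1.symm
        · exact k2.2 (by rw [hxy_off a e1 e2]; exact k2.1)
    · rfl
  -- (1) columns at off indices are equal
  have hcol : ∀ a : ZMod N, a ≠ a₁ → a ≠ a₂ → ∀ b : ZMod N, D a b = D (a-1) b := by
    intro a h1 h2 b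
    have hconst : ∀ b : ZMod N, D a b - D (a-1) b = D a (b-1) - D (a-1) (b-1) := by
      intro b
      have hc := hC0' a b (hxy_off a h1 h2)
      unfold cornerSum at hc; linarith
    have h0 : D a b - D (a-1) b = D a (x a) - D (a-1) (x a) :=
      const_formula (fun b => D a b - D (a-1) b) (fun b => hconst b) b (x a)
    have hz := F1 a h1 h2
    omega
  -- (2) the jump at a₂ is the negative of the jump at a₁
  have hf2 : ∀ b : ZMod N, D a₂ b - D (a₂-1) b = -(D a₁ b - D (a₁-1) b) := by
    intro b
    have ht : ∑ a : ZMod N, (D a b - D (a-1) b) = 0 := tele (fun a => D a b)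
    have hpair : ∑ a ∈ ({a₁, a₂} : Finset (ZMod N)), (D a b - D (a-1) b)
        = ∑ a : ZMod N, (D a b - D (a-1) b) := by
      apply Finset.sum_subset (Finset.subset_univ _)
      intro a _ ha
      rw [Finset.mem_insert, Finset.mem_singleton] at ha
      push_neg at ha
      have := hcol a ha.1 ha.2 b
      omega
    rw [Finset.sum_pair ha12, ht] at hpair
    linarith
  -- (3) column reconstruction
  have hDcol : ∀ b p : ZMod N, D p b = D (a₁-1) b +
      (D a₁ b - D (a₁-1) b) * (if (p - a₁).val < (a₂ - a₁).val then 1 else 0) := by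
    intro b
    have hh : ∀ a : ZMod N, D a b - D (a-1) b =
        (D a₁ b - D (a₁-1) b) * ((if a = a₁ then 1 else 0) - (if a = a₂ then 1 else 0)) := by
      intro a
      by_cases e1 : a = a₁
      · subst e1
        rw [if_pos rfl, if_neg ha12]
        ring
      · by_cases e2 : a = a₂
        · subst e2
          rw [if_neg e1, if_pos rfl]
          have := hf2 b
          linarith
        · rw [if_neg e1, if_neg e2]
          have := hcol a e1 e2 b
          linarith
    exact step_formula a₁ a₂ ha12 (D a₁ b - D (a₁-1) b) (fun a => D a b) hh
  -- (4) structure of the jump function f₁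
  have hf1struct : ∀ b : ZMod N, D a₁ b - D (a₁-1) b =
      (D a₁ (b₁-1) - D (a₁-1) (b₁-1)) + (if (b - b₁).val < (b₂ - b₁).val then 1 else 0) := by
    intro b
    have hh : ∀ b : ZMod N, (D a₁ b - D (a₁-1) b) - (D a₁ (b-1) - D (a₁-1) (b-1)) =
        (1:ℤ) * ((if b = b₁ then 1 else 0) - (if b = b₂ then 1 else 0)) := by
      intro b
      have hc := hCa1 b
      unfold cornerSum at hc
      linarith
    have := step_formula b₁ b₂ hb12 1 (fun b => D a₁ b - D (a₁-1) b) hh b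
    simpa using this
  -- (5) rows at off rows are equal
  have hrow0 : ∀ b : ZMod N, b ≠ b₁ → b ≠ b₂ → ∀ p : ZMod N, D p b = D p (b-1) := by
    intro b h1 h2 p
    have hconst : ∀ a : ZMod N, D a b - D a (b-1) = D (a-1) b - D (a-1) (b-1) := by
      intro a
      have hc := hCrow0 a b h1 h2
      unfold cornerSum at hc; linarith
    have h0 : D p b - D p (b-1) = D (x.symm b) b - D (x.symm b) (b-1) :=
      const_formula (fun a => D a b - D a (b-1)) (fun a => hconst a) p (x.symm b)
    have hxi : x (x.symm b) = b := x.apply_symm_apply b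
    have hi1 : x.symm b ≠ a₁ := by
      intro e; rw [e, hx1] at hxi; exact h1 hxi.symm
    have hi2 : x.symm b ≠ a₂ := by
      intro e; rw [e, hx2] at hxi; exact h2 hxi.symm
    have hz := F1 _ hi1 hi2
    rw [hxi] at hz
    omega
  -- telescoping for the base row
  have htele2 : (D (a₁-1) b₁ - D (a₁-1) (b₁-1)) + (D (a₁-1) b₂ - D (a₁-1) (b₂-1)) = 0 := by
    have ht : ∑ b : ZMod N, (D (a₁-1) b - D (a₁-1) (b-1)) = 0 := tele (fun b => D (a₁-1) b)
    have hpair : ∑ b ∈ ({b₁, b₂} : Finset (ZMod N)), (D (a₁-1) b - D (a₁-1) (b-1))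
        = ∑ b : ZMod N, (D (a₁-1) b - D (a₁-1) (b-1)) := by
      apply Finset.sum_subset (Finset.subset_univ _)
      intro b _ hb
      rw [Finset.mem_insert, Finset.mem_singleton] at hb
      push_neg at hb
      have := hrow0 b hb.1 hb.2 (a₁-1)
      omega
    rw [Finset.sum_pair hb12, ht] at hpair
    linarith
  -- (6) row reconstruction of the base column
  have hCrow : ∀ b : ZMod N, D (a₁-1) b = D (a₁-1) (b₁-1) +
      (D (a₁-1) b₁ - D (a₁-1) (b₁-1)) * (if (b - b₁).val < (b₂ - b₁).val then 1 else 0) := by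
    intro b
    have hh : ∀ b : ZMod N, D (a₁-1) b - D (a₁-1) (b-1) =
        (D (a₁-1) b₁ - D (a₁-1) (b₁-1)) * ((if b = b₁ then 1 else 0) - (if b = b₂ then 1 else 0)) := by
      intro b
      by_cases e1 : b = b₁
      · subst e1
        rw [if_pos rfl, if_neg hb12]
        ring
      · by_cases e2 : b = b₂
        · subst e2
          rw [if_neg e1, if_pos rfl]
          linarith
        · rw [if_neg e1, if_neg e2]
          have := hrow0 b e1 e2 (a₁-1)
          linarith
    exact step_formula b₁ b₂ hb12 _ (fun b => D (a₁-1) b) hh b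
  -- the master formula
  have hM : ∀ p q : ZMod N, D p q =
      (D (a₁-1) (b₁-1) + (D (a₁-1) b₁ - D (a₁-1) (b₁-1)) * (if (q - b₁).val < (b₂ - b₁).val then 1 else 0))
      + ((D a₁ (b₁-1) - D (a₁-1) (b₁-1)) + (if (q - b₁).val < (b₂ - b₁).val then 1 else 0))
        * (if (p - a₁).val < (a₂ - a₁).val then 1 else 0) := by
    intro p q
    have h3 := hDcol q p
    rw [hf1struct q, hCrow q] at h3
    exact h3
    -- numeric facts
  have hm_pos : 0 < (a₂ - a₁).val := ZMod.val_pos.mpr (sub_ne_zero.mpr (Ne.symm ha12))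
  have hm_lt : (a₂ - a₁).val < N := ZMod.val_lt _
  have hm'_pos : 0 < (b₂ - b₁).val := ZMod.val_pos.mpr (sub_ne_zero.mpr (Ne.symm hb12))
  have hm'_lt : (b₂ - b₁).val < N := ZMod.val_lt _
  have hiffI : ∀ p : ZMod N, ((p - a₁).val < (a₂ - a₁).val) ↔
      ∃ j : ℕ, j < (a₂ - a₁).val ∧ p = a₁ + (j : ZMod N) :=
    fun p => mem_int_iff a₁ p _ (le_of_lt hm_lt)
  have hiffJ : ∀ q : ZMod N, ((q - b₁).val < (b₂ - b₁).val) ↔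
      ∃ j : ℕ, j < (b₂ - b₁).val ∧ q = b₁ + (j : ZMod N) :=
    fun q => mem_int_iff b₁ q _ (le_of_lt hm'_lt)
  have hcast_a : a₁ + (((a₂ - a₁).val : ℕ) : ZMod N) = a₂ := by rw [natCast_val']; ring
  have hcast_b : b₁ + (((b₂ - b₁).val : ℕ) : ZMod N) = b₂ := by rw [natCast_val']; ring
  have hC0cases : D (a₁-1) (b₁-1) = 0 ∨ D (a₁-1) (b₁-1) = 1 := by
    have := hpos a₁ b₁; have := hpos (a₁-1) (b₁-1); omega
  rcases hC0cases with hc0 | hc0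
  · -- the rectangle is I × J
    refine ⟨a₁, b₁, (a₂ - a₁).val, (b₂ - b₁).val, hm_pos, by omega, hm'_pos, by omega,
      ?_, hx1, ?_, ?_, ?_, ?_, ?_, ?_, ?_, ?_, ?_⟩
    · intro p q
      have h := hM p q
      rw [hz1, hz2, hc0] at h
      by_cases hI : (p - a₁).val < (a₂ - a₁).val <;>
        by_cases hJ : (q - b₁).val < (b₂ - b₁).val
      · rw [if_pos hI, if_pos hJ] at h
        have hval : D p q = 1 := by linarith
        exact ⟨Or.inr hval,
          fun _ => ⟨(hiffI p).mp hI, (hiffJ q).mp hJ⟩, fun _ => hval⟩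
      · rw [if_pos hI, if_neg hJ] at h
        have hval : D p q = 0 := by linarith
        refine ⟨Or.inl hval, ?_, ?_⟩
        · intro h1; exact absurd (hval.symm.trans h1) (by norm_num)
        · rintro ⟨-, hj⟩; exact absurd ((hiffJ q).mpr hj) hJ
      · rw [if_neg hI, if_pos hJ] at h
        have hval : D p q = 0 := by linarith
        refine ⟨Or.inl hval, ?_, ?_⟩
        · intro h1; exact absurd (hval.symm.trans h1) (by norm_num)
        · rintro ⟨hj, -⟩; exact absurd ((hiffI p).mpr hj) hI
      · rw [if_neg hI, if_neg hJ] at h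
        have hval : D p q = 0 := by linarith
        refine ⟨Or.inl hval, ?_, ?_⟩
        · intro h1; exact absurd (hval.symm.trans h1) (by norm_num)
        · rintro ⟨hj, -⟩; exact absurd ((hiffI p).mpr hj) hI
    · rw [hy1]; exact Ne.symm hb12
    · rw [hcast_a, hcast_b]; exact hx2
    · rw [hcast_a, hcast_b, hy2]; exact hb12
    · rw [hcast_b]; exact hy1
    · rw [hcast_b, hx1]; exact hb12
    · rw [hcast_a]; exact hy2
    · rw [hcast_a, hx2]; exact Ne.symm hb12
    · rw [hcast_a]; exact ha12
    · intro i h1 h2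
      rw [hcast_a] at h2
      exact ⟨hxy_off i h1 h2, (hoff i h1 h2).1⟩
  · -- the rectangle is the complementary rectangle
    have hcompl_a : ∀ p : ZMod N, (¬ (p - a₁).val < (a₂ - a₁).val) ↔
        (p - a₂).val < N - (a₂ - a₁).val := by
      intro p
      have := compl_int a₁ p _ hm_pos hm_lt
      rwa [hcast_a] at this
    have hcompl_b : ∀ q : ZMod N, (¬ (q - b₁).val < (b₂ - b₁).val) ↔
        (q - b₂).val < N - (b₂ - b₁).val := by
      intro q
      have := compl_int b₁ q _ hm'_pos hm'_lt
      rwa [hcast_b] at this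
    have hiffI' : ∀ p : ZMod N, ((p - a₂).val < N - (a₂ - a₁).val) ↔
        ∃ j : ℕ, j < N - (a₂ - a₁).val ∧ p = a₂ + (j : ZMod N) :=
      fun p => mem_int_iff a₂ p _ (by omega)
    have hiffJ' : ∀ q : ZMod N, ((q - b₂).val < N - (b₂ - b₁).val) ↔
        ∃ j : ℕ, j < N - (b₂ - b₁).val ∧ q = b₂ + (j : ZMod N) :=
      fun q => mem_int_iff b₂ q _ (by omega)
    have hcast_a2 : a₂ + (((N - (a₂ - a₁).val : ℕ)) : ZMod N) = a₁ := by
      rw [natcast_N_sub _ (le_of_lt hm_lt), natCast_val']; ring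
    have hcast_b2 : b₂ + (((N - (b₂ - b₁).val : ℕ)) : ZMod N) = b₁ := by
      rw [natcast_N_sub _ (le_of_lt hm'_lt), natCast_val']; ring
    refine ⟨a₂, b₂, N - (a₂ - a₁).val, N - (b₂ - b₁).val, by omega, by omega, by omega, by omega,
      ?_, hx2, ?_, ?_, ?_, ?_, ?_, ?_, ?_, ?_, ?_⟩
    · intro p q
      have h := hM p q
      rw [hz1, hz2, hc0] at h
      by_cases hI : (p - a₁).val < (a₂ - a₁).val <;>
        by_cases hJ : (q - b₁).val < (b₂ - b₁).val
      · rw [if_pos hI, if_pos hJ] at h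
        have hval : D p q = 0 := by linarith
        refine ⟨Or.inl hval, ?_, ?_⟩
        · intro h1; exact absurd (hval.symm.trans h1) (by norm_num)
        · rintro ⟨hj, -⟩
          exact absurd hI ((hcompl_a p).mpr ((hiffI' p).mpr hj))
      · rw [if_pos hI, if_neg hJ] at h
        have hval : D p q = 0 := by linarith
        refine ⟨Or.inl hval, ?_, ?_⟩
        · intro h1; exact absurd (hval.symm.trans h1) (by norm_num)
        · rintro ⟨hj, -⟩; exact absurd hI ((hcompl_a p).mpr ((hiffI' p).mpr hj))
      · rw [if_neg hI, if_pos hJ] at h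
        have hval : D p q = 0 := by linarith
        refine ⟨Or.inl hval, ?_, ?_⟩
        · intro h1; exact absurd (hval.symm.trans h1) (by norm_num)
        · rintro ⟨-, hj⟩; exact absurd hJ ((hcompl_b q).mpr ((hiffJ' q).mpr hj))
      · rw [if_neg hI, if_neg hJ] at h
        have hval : D p q = 1 := by linarith
        exact ⟨Or.inr hval,
          fun _ => ⟨(hiffI' p).mp ((hcompl_a p).mp hI), (hiffJ' q).mp ((hcompl_b q).mp hJ)⟩,
          fun _ => hval⟩
    · rw [hy2]; exact hb12
    · rw [hcast_a2, hcast_b2]; exact hx1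
    · rw [hcast_a2, hcast_b2, hy1]; exact Ne.symm hb12
    · rw [hcast_b2]; exact hy2
    · rw [hcast_b2, hx2]; exact Ne.symm hb12
    · rw [hcast_a2]; exact hy1
    · rw [hcast_a2, hx1]; exact hb12
    · rw [hcast_a2]; exact Ne.symm ha12
    · intro i h1 h2
      rw [hcast_a2] at h2
      exact ⟨hxy_off i h2 h1, (hoff i h2 h1).1⟩
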